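/- Let G be a real symmetric positive definite 2×2 matrix with det G = 1, F = √G its positive square root, and let v₁, v₂ ∈ ℝ² satisfy v₂ = J G v₁ where J = ((0,-1),(1,0)). Then: (a) ⟨F v₁, F v₂⟩ = 0; (b) |F v₁|² = |F v₂|²; and (c) v₁ = −J G v₂. -/

import Mathlib

open scoped Matrix

noncomputable def Matrix.PosSemidef.sqrt {n : Type*} [Fintype n] [DecidableEq n]
    {A : Matrix n n ℝ} (hA : A.PosSemidef) : Matrix n n ℝ :=
  hA.1.eigenvectorUnitary.1 * Matrix.diagonal ((↑) ∘ (Real.sqrt ·) ∘ hA.1.eigenvalues) *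
    (star hA.1.eigenvectorUnitary : Matrix n n ℝ)

theorem stmt3_sqrt_transpose {n : Type*} [Fintype n] [DecidableEq n]
    {A : Matrix n n ℝ} (hA : A.PosSemidef) : (hA.sqrt)ᵀ = hA.sqrt := by
  have h := Matrix.isHermitian_mul_mul_conjTranspose (hA.1.eigenvectorUnitary.1)
    (Matrix.isHermitian_diagonal_of_self_adjoint
      ((↑) ∘ (Real.sqrt ·) ∘ hA.1.eigenvalues) (by ext i; simp))
  rw [← Matrix.conjTranspose_eq_transpose_of_trivial]
  exact h

theorem stmt3_sqrt_mul_self {n : Type*} [Fintype n] [DecidableEq n]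
    {A : Matrix n n ℝ} (hA : A.PosSemidef) : hA.sqrt * hA.sqrt = A := by
  have hU : (star hA.1.eigenvectorUnitary : Matrix n n ℝ) * hA.1.eigenvectorUnitary.1 = 1 :=
    Matrix.mem_unitaryGroup_iff'.mp hA.1.eigenvectorUnitary.2
  conv_rhs => rw [hA.1.spectral_theorem, Unitary.conjStarAlgAut_apply]
  unfold Matrix.PosSemidef.sqrt
  rw [show ∀ a b c d e : Matrix n n ℝ, a * b * c * (a * d * e) = a * (b * (c * a) * d) * e by
    intros; simp only [Matrix.mul_assoc]]
  rw [hU, Matrix.mul_one, Matrix.diagonal_mul_diagonal]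
  congr 3
  funext i
  simp [Real.mul_self_sqrt (hA.eigenvalues_nonneg i)]


theorem stmt3 (G : Matrix (Fin 2) (Fin 2) ℝ) (hG : G.PosDef) (hdet : G.det = 1)
    (F : Matrix (Fin 2) (Fin 2) ℝ) (hF : F = hG.posSemidef.sqrt)
    (v₁ v₂ : Fin 2 → ℝ)
    (hv : v₂ = (!![0, -1; 1, 0] : Matrix (Fin 2) (Fin 2) ℝ) *ᵥ (G *ᵥ v₁)) :
    (F *ᵥ v₁) ⬝ᵥ (F *ᵥ v₂) = 0 ∧
    (F *ᵥ v₁) ⬝ᵥ (F *ᵥ v₁) = (F *ᵥ v₂) ⬝ᵥ (F *ᵥ v₂) ∧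
    v₁ = -((!![0, -1; 1, 0] : Matrix (Fin 2) (Fin 2) ℝ) *ᵥ (G *ᵥ v₂)) := by
  have hFt : Fᵀ = F := by
    rw [hF]
    exact stmt3_sqrt_transpose _
  have hFF : F * F = G := by rw [hF]; exact stmt3_sqrt_mul_self _
  have key : ∀ a b : Fin 2 → ℝ, (F *ᵥ a) ⬝ᵥ (F *ᵥ b) = a ⬝ᵥ (G *ᵥ b) := by
    intro a b
    have h1 : F *ᵥ a = a ᵥ* F := by
      conv_lhs => rw [← hFt]
      rw [Matrix.mulVec_transpose]
    rw [Matrix.dotProduct_mulVec, h1, Matrix.vecMul_vecMul, hFF,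
      ← Matrix.dotProduct_mulVec]
  have hsym : G 1 0 = G 0 1 := by
    have := hG.isHermitian
    have h := congrFun (congrFun this.eq 1) 0
    simpa [Matrix.conjTranspose_apply] using h.symm
  rw [Matrix.det_fin_two, hsym] at hdet
  subst hv
  refine ⟨?_, ?_, ?_⟩
  · rw [key]
    simp [Matrix.mulVec, dotProduct, Fin.sum_univ_two]
    rw [hsym]; ring
  · rw [key, key]
    simp [Matrix.mulVec, dotProduct, Fin.sum_univ_two]
    rw [hsym]
    linear_combination (-(v₁ 0 * (G 0 0 * v₁ 0 + G 0 1 * v₁ 1)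
      + v₁ 1 * (G 0 1 * v₁ 0 + G 1 1 * v₁ 1))) * hdet
  · funext i
    fin_cases i <;>
    · simp [Matrix.mulVec, Matrix.vecMul, dotProduct, Fin.sum_univ_two,
        Matrix.vecHead, Matrix.vecTail]
      rw [hsym]
      first
        | linear_combination (v₁ 0) * hdet
        | linear_combination (v₁ 1) * hdet
        | linear_combination (-(v₁ 0)) * hdet
        | linear_combination (-(v₁ 1)) * hdet
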